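/- arXiv:1807.06927 — 5 statements merged into one kernel-verified Lean document; each statement's English description precedes it below -/
import Mathlib

section
/- For every M, L > 0 there exists a Borel probability measure η on ℝ with finite absolute moments of all orders such that the following holds: for every pair of finite Borel measures μ⁺, μ⁻ on ℝ, both supported in [−M, M], with μ⁺(ℝ) − μ⁻(ℝ) = 1 and with (μ⁺ + μ⁻)([b, c]) ≤ L(c − b) for all b ≤ c in [−M, M], one has (μ⁻ ∗ η)(A) ≤ (μ⁺ ∗ η)(A) for every Borel set A ⊆ ℝ. (Equivalently: the signed measure μ = μ⁺ − μ⁻, which lies in the class M_M^L of signed measures supported in [−M,M] whose total variation measure has density bounded by L, becomes a probability measure after convolution with the single measure η.) -/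
open MeasureTheory ProbabilityTheory

/-- All absolute moments of `μ` are finite. -/
def HasAllMoments (μ : Measure ℝ) : Prop := ∀ n : ℕ, Integrable (fun x : ℝ => |x| ^ n) μ

open Real Set
open scoped ENNReal

namespace SmoothAux

lemma integrable_even_of_Ioi {f : ℝ → ℝ} (hf : IntegrableOn (fun x => f |x|) (Set.Ioi 0)) :
    Integrable (fun x => f |x|) := by
  have int_Iic : IntegrableOn (fun x ↦ f |x|) (Set.Iic 0) := by
    rw [← Measure.map_neg_eq_self (volume : Measure ℝ)]
    have m : MeasurableEmbedding fun x : ℝ => -x := (Homeomorph.neg ℝ).measurableEmbedding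
    rw [m.integrableOn_map_iff]
    simp_rw [Function.comp_def, abs_neg, Set.neg_preimage, Set.neg_Iic, neg_zero]
    exact Iff.mpr integrableOn_Ici_iff_integrableOn_Ioi hf
  have h := int_Iic.union hf
  rwa [Set.Iic_union_Ioi, integrableOn_univ] at h

lemma integrable_pow_mul_exp_neg_mul_abs {b : ℝ} (hb : 0 < b) (n : ℕ) :
    Integrable (fun x : ℝ => |x| ^ n * Real.exp (-b * |x|)) := by
  have h := integrableOn_rpow_mul_exp_neg_mul_rpow (s := (n : ℝ)) (p := 1)
    (lt_of_lt_of_le neg_one_lt_zero (Nat.cast_nonneg n)) zero_lt_one hb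
  have h2 : IntegrableOn (fun x : ℝ => |x| ^ n * Real.exp (-b * |x|)) (Set.Ioi 0) := by
    refine h.congr_fun (fun x hx => ?_) measurableSet_Ioi
    have hx0 : (0:ℝ) < x := hx
    rw [abs_of_pos hx0]
    beta_reduce
    rw [Real.rpow_natCast, Real.rpow_one]
  exact integrable_even_of_Ioi (f := fun x => x ^ n * Real.exp (-b * x)) h2

lemma conv_withDensity_apply (μ : Measure ℝ) [IsFiniteMeasure μ] {f : ℝ → ℝ≥0∞}
    (hf : Measurable f) {s : Set ℝ} (hs : MeasurableSet s) :
    μ.conv (volume.withDensity f) s = ∫⁻ z in s, ∫⁻ x, f (z - x) ∂μ ∂volume := by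
  rw [Measure.conv, Measure.map_apply measurable_add hs,
    Measure.prod_apply (measurable_add hs)]
  have key : ∀ x : ℝ, (volume.withDensity f)
      (Prod.mk x ⁻¹' ((fun p : ℝ × ℝ => p.1 + p.2) ⁻¹' s))
      = ∫⁻ z, s.indicator (fun z => f (z - x)) z ∂volume := by
    intro x
    have hpre : (Prod.mk x ⁻¹' ((fun p : ℝ × ℝ => p.1 + p.2) ⁻¹' s))
        = (fun y => x + y) ⁻¹' s := rfl
    rw [hpre, withDensity_apply _ ((measurable_const_add x) hs),
      ← lintegral_indicator ((measurable_const_add x) hs)]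
    rw [← lintegral_add_left_eq_self (s.indicator (fun z => f (z - x))) x]
    congr 1
    funext y
    by_cases hy : x + y ∈ s
    · rw [Set.indicator_of_mem (show y ∈ (fun y => x + y) ⁻¹' s from hy),
        Set.indicator_of_mem hy, add_sub_cancel_left]
    · rw [Set.indicator_of_notMem (show y ∉ (fun y => x + y) ⁻¹' s from hy),
        Set.indicator_of_notMem hy]
  simp_rw [key]
  have hmeas : Measurable (Function.uncurry
      (fun x z => s.indicator (fun z' => f (z' - x)) z : ℝ → ℝ → ℝ≥0∞)) := by
    have : Function.uncurry (fun x z => s.indicator (fun z' => f (z' - x)) z : ℝ → ℝ → ℝ≥0∞)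
        = Set.indicator (Prod.snd ⁻¹' s) (fun p : ℝ × ℝ => f (p.2 - p.1)) := by
      funext p
      by_cases hp : p.2 ∈ s
      · rw [Function.uncurry]
        simp only [Set.indicator_of_mem hp, Set.indicator_of_mem (show p ∈ Prod.snd ⁻¹' s from hp)]
      · rw [Function.uncurry]
        simp only [Set.indicator_of_notMem hp,
          Set.indicator_of_notMem (show p ∉ Prod.snd ⁻¹' s from hp)]
    rw [this]
    exact (hf.comp (measurable_snd.sub measurable_fst)).indicator (measurable_snd hs)
  rw [lintegral_lintegral_swap hmeas.aemeasurable]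
  rw [← lintegral_indicator hs]
  congr 1
  funext z
  by_cases hz : z ∈ s
  · simp only [Set.indicator_of_mem hz]
  · simp only [Set.indicator_of_notMem hz, lintegral_zero]

end SmoothAux

theorem stmt_12 (M L : ℝ) (hM : 0 < M) (hL : 0 < L) :
    ∃ η : Measure ℝ, IsProbabilityMeasure η ∧ HasAllMoments η ∧
      ∀ μp μm : Measure ℝ, IsFiniteMeasure μp → IsFiniteMeasure μm →
        -- both parts are supported in [-M, M]
        μp (Set.Icc (-M) M)ᶜ = 0 → μm (Set.Icc (-M) M)ᶜ = 0 →
        -- total mass of the signed measure μp - μm is 1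
        μp Set.univ = μm Set.univ + 1 →
        -- the total variation measure has density bounded by L on [-M, M]
        (∀ b c : ℝ, -M ≤ b → b ≤ c → c ≤ M →
          (μp + μm) (Set.Icc b c) ≤ ENNReal.ofReal (L * (c - b))) →
        -- μp - μm becomes a (positive) probability measure after convolution with η
        μm.conv η ≤ μp.conv η := by
  have h2LM : (0:ℝ) < 2 * L * M := by positivity
  set t : ℝ := Real.log (1 + 1 / (2 * L * M)) / 2 with ht_def
  have ht : 0 < t := by
    apply div_pos _ two_pos
    apply Real.log_pos
    have : (0:ℝ) < 1 / (2 * L * M) := by positivity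
    linarith
  have he2t : Real.exp (2 * t) = 1 + 1 / (2 * L * M) := by
    rw [ht_def, show 2 * (Real.log (1 + 1 / (2 * L * M)) / 2)
      = Real.log (1 + 1 / (2 * L * M)) by ring]
    apply Real.exp_log
    have : (0:ℝ) < 1 / (2 * L * M) := by positivity
    linarith
  set ε : ℝ := t / M with hε_def
  have hε : 0 < ε := div_pos ht hM
  have hεM : ε * M = t := by rw [hε_def, div_mul_cancel₀ _ hM.ne']
  set f₀ : ℝ → ℝ≥0∞ := fun x => ENNReal.ofReal (Real.exp (-ε * |x|)) with hf₀_def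
  have hf₀m : Measurable f₀ := by
    apply Measurable.ennreal_ofReal
    exact (measurable_id.abs.const_mul (-ε)).exp
  have hint : Integrable (fun x : ℝ => Real.exp (-ε * |x|)) := by
    have h := SmoothAux.integrable_pow_mul_exp_neg_mul_abs hε 0
    simpa using h
  set I : ℝ≥0∞ := ∫⁻ x, f₀ x with hI_def
  have hIlt : I < ⊤ := hint.lintegral_lt_top
  have hIpos : 0 < I := by
    rw [hI_def, lintegral_pos_iff_support hf₀m]
    have hsupp : Function.support f₀ = Set.univ := by
      ext x
      simp only [Function.mem_support, Set.mem_univ, iff_true, hf₀_def]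
      exact (ENNReal.ofReal_pos.mpr (Real.exp_pos _)).ne'
    rw [hsupp]
    simp
  set f : ℝ → ℝ≥0∞ := fun x => I⁻¹ * f₀ x with hf_def
  have hfm : Measurable f := hf₀m.const_mul _
  refine ⟨volume.withDensity f, ?_, ?_, ?_⟩
  · constructor
    rw [withDensity_apply _ MeasurableSet.univ, Measure.restrict_univ, hf_def,
      lintegral_const_mul _ hf₀m, ← hI_def]
    exact ENNReal.inv_mul_cancel hIpos.ne' hIlt.ne
  · intro n
    have hflt : ∀ᵐ x : ℝ, f x < ⊤ := by
      apply Filter.Eventually.of_forall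
      intro x
      exact ENNReal.mul_lt_top (by simp [ENNReal.inv_lt_top, hIpos]) ENNReal.ofReal_lt_top
    rw [integrable_withDensity_iff hfm hflt]
    have heq : (fun x : ℝ => |x| ^ n * (f x).toReal)
        = fun x : ℝ => I⁻¹.toReal * (|x| ^ n * Real.exp (-ε * |x|)) := by
      funext x
      rw [hf_def]
      simp only [hf₀_def, ENNReal.toReal_mul, ENNReal.toReal_ofReal (Real.exp_pos _).le]
      ring
    rw [heq]
    exact (SmoothAux.integrable_pow_mul_exp_neg_mul_abs hε n).const_mul _
  · intro μp μm hfinp hfinm hsp hsm hmass hLbound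
    haveI := hfinp; haveI := hfinm
    -- mass identities
    have hmIcc : μm Set.univ = μm (Set.Icc (-M) M) := by
      rw [← measure_add_measure_compl measurableSet_Icc, hsm, add_zero]
    have hpIcc : μp Set.univ = μp (Set.Icc (-M) M) := by
      rw [← measure_add_measure_compl measurableSet_Icc, hsp, add_zero]
    have hm_bound : μm Set.univ ≤ ENNReal.ofReal (2 * L * M) := by
      rw [hmIcc]
      calc μm (Set.Icc (-M) M) ≤ (μp + μm) (Set.Icc (-M) M) := by
            rw [Measure.add_apply]; exact le_add_self
        _ ≤ ENNReal.ofReal (L * (M - -M)) :=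
            hLbound (-M) M le_rfl (by linarith) le_rfl
        _ = ENNReal.ofReal (2 * L * M) := by ring_nf
    -- the key real inequality
    have hkey : ∀ m' : ℝ, 0 ≤ m' → m' ≤ 2 * L * M →
        Real.exp t * m' ≤ Real.exp (-t) * (m' + 1) := by
      intro m' hm0 hm1
      have h1 : Real.exp t * m' * Real.exp t ≤ m' + 1 := by
        have e1 : Real.exp t * m' * Real.exp t = Real.exp (2 * t) * m' := by
          rw [show Real.exp t * m' * Real.exp t = Real.exp t * Real.exp t * m' by ring,
            ← Real.exp_add]
          ring_nf
        rw [e1, he2t]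
        have h2 : m' * (1 / (2 * L * M)) ≤ 1 := by
          rw [mul_one_div, div_le_one h2LM]; exact hm1
        nlinarith
      have h2 := mul_le_mul_of_nonneg_right h1 (Real.exp_pos (-t)).le
      rw [mul_assoc, ← Real.exp_add, add_neg_cancel, Real.exp_zero, mul_one] at h2
      linarith
    -- pointwise density comparison
    have hpoint : ∀ z : ℝ, ∫⁻ x, f₀ (z - x) ∂μm ≤ ∫⁻ x, f₀ (z - x) ∂μp := by
      intro z
      have upper : ∀ x ∈ Set.Icc (-M) M,
          f₀ (z - x) ≤ ENNReal.ofReal (Real.exp t) * f₀ z := by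
        intro x hx
        rw [hf₀_def, ← ENNReal.ofReal_mul (Real.exp_pos t).le, ← Real.exp_add]
        apply ENNReal.ofReal_le_ofReal
        apply Real.exp_le_exp.mpr
        have hxM : |x| ≤ M := abs_le.mpr ⟨hx.1, hx.2⟩
        have h1 : |z| - |z - x| ≤ |x| := by
          have h := abs_sub_abs_le_abs_sub z (z - x)
          simpa using h
        have h2 : ε * (|z| - |z - x|) ≤ ε * M :=
          mul_le_mul_of_nonneg_left (h1.trans hxM) hε.le
        rw [hεM] at h2
        nlinarith
      have lower : ∀ x ∈ Set.Icc (-M) M,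
          ENNReal.ofReal (Real.exp (-t)) * f₀ z ≤ f₀ (z - x) := by
        intro x hx
        rw [hf₀_def, ← ENNReal.ofReal_mul (Real.exp_pos (-t)).le, ← Real.exp_add]
        apply ENNReal.ofReal_le_ofReal
        apply Real.exp_le_exp.mpr
        have hxM : |x| ≤ M := abs_le.mpr ⟨hx.1, hx.2⟩
        have h1 : |z - x| - |z| ≤ |x| := by
          have h := abs_sub_abs_le_abs_sub (z - x) z
          simpa using h
        have h2 : ε * (|z - x| - |z|) ≤ ε * M :=
          mul_le_mul_of_nonneg_left (h1.trans hxM) hε.le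
        rw [hεM] at h2
        nlinarith
      have hup : ∫⁻ x, f₀ (z - x) ∂μm
          ≤ ENNReal.ofReal (Real.exp t) * f₀ z * μm Set.univ := by
        have hres : ∫⁻ x, f₀ (z - x) ∂μm = ∫⁻ x in Set.Icc (-M) M, f₀ (z - x) ∂μm := by
          rw [← lintegral_add_compl (fun x => f₀ (z - x)) measurableSet_Icc,
            show ∫⁻ x in (Set.Icc (-M) M)ᶜ, f₀ (z - x) ∂μm = 0 from by
              rw [Measure.restrict_eq_zero.mpr hsm]; exact lintegral_zero_measure _,
            add_zero]
        rw [hres]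
        calc ∫⁻ x in Set.Icc (-M) M, f₀ (z - x) ∂μm
            ≤ ∫⁻ _ in Set.Icc (-M) M, ENNReal.ofReal (Real.exp t) * f₀ z ∂μm :=
              setLIntegral_mono' measurableSet_Icc upper
          _ = ENNReal.ofReal (Real.exp t) * f₀ z * μm (Set.Icc (-M) M) :=
              setLIntegral_const _ _
          _ ≤ ENNReal.ofReal (Real.exp t) * f₀ z * μm Set.univ := by
              exact mul_le_mul_right (measure_mono (Set.subset_univ _)) _
      have hdown : ENNReal.ofReal (Real.exp (-t)) * f₀ z * μp Set.univ
          ≤ ∫⁻ x, f₀ (z - x) ∂μp := by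
        rw [hpIcc]
        calc ENNReal.ofReal (Real.exp (-t)) * f₀ z * μp (Set.Icc (-M) M)
            = ∫⁻ _ in Set.Icc (-M) M, ENNReal.ofReal (Real.exp (-t)) * f₀ z ∂μp :=
              (setLIntegral_const _ _).symm
          _ ≤ ∫⁻ x in Set.Icc (-M) M, f₀ (z - x) ∂μp :=
              setLIntegral_mono' measurableSet_Icc lower
          _ ≤ ∫⁻ x, f₀ (z - x) ∂μp := setLIntegral_le_lintegral _ _
      have hmid : ENNReal.ofReal (Real.exp t) * f₀ z * μm Set.univ
          ≤ ENNReal.ofReal (Real.exp (-t)) * f₀ z * μp Set.univ := by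
        rw [hmass]
        have hmfin : μm Set.univ ≠ ⊤ := measure_ne_top μm _
        have hm' : μm Set.univ = ENNReal.ofReal (μm Set.univ).toReal :=
          (ENNReal.ofReal_toReal hmfin).symm
        have hmr : (μm Set.univ).toReal ≤ 2 * L * M :=
          ENNReal.toReal_le_of_le_ofReal h2LM.le hm_bound
        have core : ENNReal.ofReal (Real.exp t) * μm Set.univ
            ≤ ENNReal.ofReal (Real.exp (-t)) * (μm Set.univ + 1) := by
          rw [hm', ← ENNReal.ofReal_one, ← ENNReal.ofReal_add ENNReal.toReal_nonneg zero_le_one,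
            ← ENNReal.ofReal_mul (Real.exp_pos t).le,
            ← ENNReal.ofReal_mul (Real.exp_pos (-t)).le]
          exact ENNReal.ofReal_le_ofReal
            (hkey (μm Set.univ).toReal ENNReal.toReal_nonneg hmr)
        calc ENNReal.ofReal (Real.exp t) * f₀ z * μm Set.univ
            = (ENNReal.ofReal (Real.exp t) * μm Set.univ) * f₀ z := by ring
          _ ≤ (ENNReal.ofReal (Real.exp (-t)) * (μm Set.univ + 1)) * f₀ z :=
              mul_le_mul_left core _
          _ = ENNReal.ofReal (Real.exp (-t)) * f₀ z * (μm Set.univ + 1) := by ring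
      exact hup.trans (hmid.trans hdown)
    rw [Measure.le_iff]
    intro s hs
    rw [SmoothAux.conv_withDensity_apply μm hfm hs, SmoothAux.conv_withDensity_apply μp hfm hs]
    apply lintegral_mono
    intro z
    have hcm : Measurable (fun x : ℝ => f₀ (z - x)) :=
      hf₀m.comp (measurable_const.sub measurable_id)
    simp only [hf_def]
    rw [lintegral_const_mul _ hcm, lintegral_const_mul _ hcm]
    exact mul_le_mul_right (hpoint z) _
end

section
/- Let μ and ν be compactly supported Borel probability measures on ℝ such that sup(supp μ) < sup(supp ν). Then for every Borel probability measure η on ℝ satisfying ∫ e^{tx} dη(x) < ∞ for all t > 0, it is not the case that μ ∗ η ≥₁ ν ∗ η. In particular, if the top of the support of X lies strictly below that of Y, no independent background risk with everywhere-finite moment generating function can make X + Z first-order stochastically dominate Y + Z. -/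
open MeasureTheory ProbabilityTheory

/-- `μ` first-order stochastically dominates `ν`: the CDF of `μ` lies below that of `ν`. -/
def FSD (μ ν : Measure ℝ) : Prop := ∀ t : ℝ, cdf μ t ≤ cdf ν t

/-- The (topological) support of a measure on `ℝ`: points all of whose neighborhoods have
positive measure. -/
def msupport (μ : Measure ℝ) : Set ℝ := {x | ∀ U ∈ nhds x, μ U ≠ 0}

lemma msupport_compl_null (μ : Measure ℝ) : μ (msupport μ)ᶜ = 0 := by
  apply measure_null_of_locally_null
  intro x hx
  simp only [msupport, Set.mem_compl_iff, Set.mem_setOf_eq] at hx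
  push_neg at hx
  obtain ⟨U, hU, hU0⟩ := hx
  exact ⟨U, nhdsWithin_le_nhds hU, hU0⟩

lemma isClosed_msupport (μ : Measure ℝ) : IsClosed (msupport μ) := by
  rw [← isOpen_compl_iff, isOpen_iff_mem_nhds]
  intro x hx
  simp only [msupport, Set.mem_compl_iff, Set.mem_setOf_eq] at hx
  push_neg at hx
  obtain ⟨U, hU, hU0⟩ := hx
  refine Filter.mem_of_superset (interior_mem_nhds.2 hU) ?_
  intro y hy hy'
  exact hy' U (mem_interior_iff_mem_nhds.1 hy) hU0

lemma msupport_nonempty (μ : Measure ℝ) [IsProbabilityMeasure μ] : (msupport μ).Nonempty := by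
  by_contra h
  rw [Set.not_nonempty_iff_eq_empty] at h
  have := msupport_compl_null μ
  rw [h, Set.compl_empty, measure_univ] at this
  exact one_ne_zero this

/-- The MGF-lintegral of a convolution factors. -/
lemma lint_conv (ρ σ : Measure ℝ) [SFinite ρ] [SFinite σ] (t : ℝ) :
    ∫⁻ x, ENNReal.ofReal (Real.exp (t * x)) ∂(ρ.conv σ)
      = (∫⁻ x, ENNReal.ofReal (Real.exp (t * x)) ∂ρ)
        * ∫⁻ x, ENNReal.ofReal (Real.exp (t * x)) ∂σ := by
  unfold Measure.conv
  rw [lintegral_map (by fun_prop) (by fun_prop)]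
  have h : ∀ p : ℝ × ℝ, ENNReal.ofReal (Real.exp (t * (p.1 + p.2)))
      = ENNReal.ofReal (Real.exp (t * p.1)) * ENNReal.ofReal (Real.exp (t * p.2)) := by
    intro p
    rw [← ENNReal.ofReal_mul (le_of_lt (Real.exp_pos _)), ← Real.exp_add]
    ring_nf
  simp_rw [h]
  exact lintegral_prod_mul (f := fun x : ℝ => ENNReal.ofReal (Real.exp (t * x)))
    (g := fun x : ℝ => ENNReal.ofReal (Real.exp (t * x)))
    (Measurable.aemeasurable (by fun_prop)) (Measurable.aemeasurable (by fun_prop))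

theorem stmt_14 (μ ν : Measure ℝ) [IsProbabilityMeasure μ] [IsProbabilityMeasure ν]
    (hμc : IsCompact (msupport μ)) (hνc : IsCompact (msupport ν))
    (hsup : sSup (msupport μ) < sSup (msupport ν))
    (η : Measure ℝ) [IsProbabilityMeasure η]
    (hmgf : ∀ t : ℝ, 0 < t → Integrable (fun x : ℝ => Real.exp (t * x)) η) :
    ¬ FSD (μ.conv η) (ν.conv η) := by
  intro hFSD
  set sm := sSup (msupport μ) with hsm
  set sn := sSup (msupport ν) with hsn
  set a := (sm + sn) / 2 with ha
  have ham : sm < a := by rw [ha]; linarith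
  have han : a < sn := by rw [ha]; linarith
  -- ν has positive mass above a
  have hp : ν (Set.Ioi a) ≠ 0 := by
    have hsnmem : sn ∈ msupport ν :=
      hνc.sSup_mem (msupport_nonempty ν)
    exact hsnmem _ (Ioi_mem_nhds han)
  -- μ has no mass above sm
  have hμtail : μ (Set.Ioi sm) = 0 := by
    refine measure_mono_null ?_ (msupport_compl_null μ)
    intro x hx hxs
    exact absurd (le_csSup hμc.bddAbove hxs) (not_le.2 hx)
  -- Tail comparison from FSD
  have htail : ∀ x : ℝ, (ν.conv η) (Set.Ioi x) ≤ (μ.conv η) (Set.Ioi x) := by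
    intro x
    have h1 : (μ.conv η) (Set.Iic x) ≤ (ν.conv η) (Set.Iic x) := by
      rw [← ofReal_cdf (μ.conv η) x, ← ofReal_cdf (ν.conv η) x]
      exact ENNReal.ofReal_le_ofReal (hFSD x)
    have h2 : ∀ (ρ : Measure ℝ) [IsProbabilityMeasure ρ],
        ρ (Set.Ioi x) = 1 - ρ (Set.Iic x) := by
      intro ρ _
      rw [← Set.compl_Iic, measure_compl measurableSet_Iic (measure_ne_top ρ _), measure_univ]
    rw [h2 (μ.conv η), h2 (ν.conv η)]
    exact tsub_le_tsub le_rfl h1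
  -- MGF comparison in ENNReal
  set E : Measure ℝ → ℝ → ENNReal :=
    fun ρ t => ∫⁻ x, ENNReal.ofReal (Real.exp (t * x)) ∂ρ with hE
  have hmeas : ∀ t : ℝ, Measurable fun x : ℝ => Real.exp (t * x) := by
    intro t; fun_prop
  have hlayer : ∀ (ρ : Measure ℝ) (t : ℝ),
      E ρ t = ∫⁻ s in Set.Ioi (0:ℝ), ρ {y : ℝ | s < Real.exp (t * y)} := by
    intro ρ t
    exact lintegral_eq_lintegral_meas_lt ρ
      (Filter.Eventually.of_forall fun x => (Real.exp_pos _).le) (hmeas t).aemeasurable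
  have hEmono : ∀ t : ℝ, 0 < t → E (ν.conv η) t ≤ E (μ.conv η) t := by
    intro t htpos
    rw [hlayer, hlayer]
    refine lintegral_mono_ae ?_
    filter_upwards [self_mem_ae_restrict measurableSet_Ioi] with s hs
    have hs' : (0:ℝ) < s := hs
    have hset : {y : ℝ | s < Real.exp (t * y)} = Set.Ioi (Real.log s / t) := by
      ext y
      simp only [Set.mem_setOf_eq, Set.mem_Ioi]
      rw [div_lt_iff₀ htpos, ← Real.log_lt_iff_lt_exp hs', mul_comm]
    rw [hset]
    exact htail _
  -- factor out E η t
  have hfactor : ∀ t : ℝ, 0 < t → E ν t ≤ E μ t := by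
    intro t htpos
    have hconvμ : E (μ.conv η) t = E μ t * E η t := lint_conv μ η t
    have hconvν : E (ν.conv η) t = E ν t * E η t := lint_conv ν η t
    have hη0 : E η t ≠ 0 := by
      rw [hE]
      simp only
      rw [← pos_iff_ne_zero, lintegral_pos_iff_support (by fun_prop)]
      have : Function.support (fun x : ℝ => ENNReal.ofReal (Real.exp (t * x))) = Set.univ := by
        ext x
        simp only [Function.mem_support, ne_eq, Set.mem_univ, iff_true]
        exact (ENNReal.ofReal_pos.2 (Real.exp_pos _)).ne'
      rw [this, measure_univ]
      exact one_pos
    have hηtop : E η t ≠ ⊤ := (hmgf t htpos).lintegral_lt_top.ne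
    have := hEmono t htpos
    rw [hconvμ, hconvν] at this
    exact (ENNReal.mul_le_mul_iff_left hη0 hηtop).1 this
  -- Upper bound for E μ t
  have hEμ : ∀ t : ℝ, 0 < t → E μ t ≤ ENNReal.ofReal (Real.exp (t * sm)) := by
    intro t htpos
    have hae : ∀ᵐ x ∂μ, ENNReal.ofReal (Real.exp (t * x)) ≤ ENNReal.ofReal (Real.exp (t * sm)) := by
      have : ∀ᵐ x ∂μ, x ≤ sm := by
        rw [ae_iff]
        convert hμtail using 2
        ext x; simp [Set.Ioi]
      filter_upwards [this] with x hx
      exact ENNReal.ofReal_le_ofReal (Real.exp_le_exp.2 (by nlinarith))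
    calc E μ t ≤ ∫⁻ _, ENNReal.ofReal (Real.exp (t * sm)) ∂μ := lintegral_mono_ae hae
    _ = ENNReal.ofReal (Real.exp (t * sm)) := by simp
  -- Lower bound for E ν t
  have hEν : ∀ t : ℝ, 0 < t →
      ν (Set.Ioi a) * ENNReal.ofReal (Real.exp (t * a)) ≤ E ν t := by
    intro t htpos
    calc ν (Set.Ioi a) * ENNReal.ofReal (Real.exp (t * a))
        = ∫⁻ x, (Set.Ioi a).indicator (fun _ => ENNReal.ofReal (Real.exp (t * a))) x ∂ν := by
          rw [lintegral_indicator_const measurableSet_Ioi, mul_comm]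
    _ ≤ E ν t := by
          refine lintegral_mono fun x => ?_
          by_cases hx : x ∈ Set.Ioi a
          · rw [Set.indicator_of_mem hx]
            exact ENNReal.ofReal_le_ofReal (Real.exp_le_exp.2 (by nlinarith [hx.out]))
          · rw [Set.indicator_of_notMem hx]
            exact zero_le
  -- Put it together: contradiction for large t
  set q := (ν (Set.Ioi a)).toReal with hq
  have hq1 : ν (Set.Ioi a) ≠ ⊤ := measure_ne_top ν _
  have hqpos : 0 < q := ENNReal.toReal_pos hp hq1
  have key : ∀ t : ℝ, 0 < t → q * Real.exp (t * a) ≤ Real.exp (t * sm) := by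
    intro t htpos
    have h1 : ν (Set.Ioi a) * ENNReal.ofReal (Real.exp (t * a))
        ≤ ENNReal.ofReal (Real.exp (t * sm)) :=
      le_trans (le_trans (hEν t htpos) (hfactor t htpos)) (hEμ t htpos)
    have h2 : ν (Set.Ioi a) = ENNReal.ofReal q := by
      rw [hq, ENNReal.ofReal_toReal hq1]
    rw [h2, ← ENNReal.ofReal_mul hqpos.le] at h1
    exact (ENNReal.ofReal_le_ofReal_iff (Real.exp_pos _).le).1 h1
  -- choose t
  set t := (|Real.log q| + 1) / (a - sm) with htdef
  have htpos : 0 < t := div_pos (by positivity) (by linarith)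
  have := key t htpos
  have hlog : Real.log (q * Real.exp (t * a)) ≤ Real.log (Real.exp (t * sm)) :=
    Real.log_le_log (by positivity) this
  rw [Real.log_mul hqpos.ne' (Real.exp_pos _).ne', Real.log_exp, Real.log_exp] at hlog
  have hteq : t * (a - sm) = |Real.log q| + 1 := by
    have hne : a - sm ≠ 0 := by linarith
    rw [htdef]; field_simp
  have habs : -|Real.log q| ≤ Real.log q := neg_abs_le _
  nlinarith [hlog, hteq, habs]
end

section
/- Let k ≥ 0 be an integer and let μ, ν be Borel probability measures on ℝ with finite (k+2)-th absolute moments and equal means, ∫x dμ(x) = ∫x dν(x). Then, with F_μ, F_ν the CDFs of μ, ν, the limit as n → ∞ of ∫_{−n}^{n} t^k (∫_{−∞}^{t} (F_ν(u) − F_μ(u)) du) dt exists and equals (1/((k+1)(k+2)))·(∫u^{k+2} dν(u) − ∫u^{k+2} dμ(u)). -/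
open MeasureTheory ProbabilityTheory Filter Set
open scoped ENNReal Topology

lemma lint_cdf (ρ : Measure ℝ) [IsProbabilityMeasure ρ] (t : ℝ) :
    ∫⁻ u in Iic t, ENNReal.ofReal (cdf ρ u) = ∫⁻ x, ENNReal.ofReal (max (t - x) 0) ∂ρ := by
  have h1 : ∀ u, ENNReal.ofReal (cdf ρ u) = ρ (Iic u) := fun u => by
    rw [cdf_eq_real, measureReal_def, ENNReal.ofReal_toReal (measure_ne_top ρ _)]
  have hS : MeasurableSet {p : ℝ × ℝ | p.2 ≤ p.1} :=
    measurableSet_le measurable_snd measurable_fst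
  have h2 : ∀ u, ρ (Iic u)
      = ∫⁻ x, Set.indicator {p : ℝ × ℝ | p.2 ≤ p.1} (1 : ℝ × ℝ → ℝ≥0∞) (u, x) ∂ρ := by
    intro u
    refine (lintegral_indicator_one measurableSet_Iic).symm.trans (lintegral_congr fun x => ?_)
    by_cases h : x ≤ u <;> simp [h, Set.indicator]
  simp_rw [h1, h2]
  rw [lintegral_lintegral_swap]
  · refine lintegral_congr fun x => ?_
    have h3 : ∀ u, Set.indicator {p : ℝ × ℝ | p.2 ≤ p.1} (1 : ℝ × ℝ → ℝ≥0∞) (u, x)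
        = Set.indicator (Ici x) (1 : ℝ → ℝ≥0∞) u := by
      intro u; by_cases h : x ≤ u <;> simp [h, Set.indicator]
    simp_rw [h3]
    rw [lintegral_indicator_one measurableSet_Ici, Measure.restrict_apply measurableSet_Ici,
      Ici_inter_Iic, Real.volume_Icc]
    rcases le_total x t with h | h
    · rw [max_eq_left (by linarith)]
    · rw [max_eq_right (by linarith), ENNReal.ofReal_of_nonpos (by linarith), ENNReal.ofReal_zero]
  · exact (measurable_one.indicator hS).aemeasurable

lemma int_max (ρ : Measure ℝ) [IsFiniteMeasure ρ] (hρ : Integrable (fun x : ℝ => x) ρ) (t : ℝ) :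
    Integrable (fun x => max (t - x) 0) ρ :=
  ((integrable_const t).sub hρ).pos_part

lemma cdf_intOn (ρ : Measure ℝ) [IsProbabilityMeasure ρ]
    (hρ : Integrable (fun x : ℝ => x) ρ) (t : ℝ) :
    IntegrableOn (cdf ρ) (Iic t) := by
  refine ⟨((monotone_cdf (μ := ρ)).measurable).aestronglyMeasurable, ?_⟩
  rw [hasFiniteIntegral_iff_ofReal (Eventually.of_forall fun u => cdf_nonneg (μ := ρ) u)]
  rw [lint_cdf]
  have := (int_max ρ hρ t).hasFiniteIntegral
  rwa [hasFiniteIntegral_iff_ofReal (f := fun x => max (t - x) 0)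
    (Eventually.of_forall fun x => le_max_right _ _)] at this

lemma cdf_setIntegral (ρ : Measure ℝ) [IsProbabilityMeasure ρ]
    (hρ : Integrable (fun x : ℝ => x) ρ) (t : ℝ) :
    ∫ u in Iic t, cdf ρ u = ∫ x, max (t - x) 0 ∂ρ := by
  rw [integral_eq_lintegral_of_nonneg_ae (Eventually.of_forall fun u => cdf_nonneg (μ := ρ) u)
      ((monotone_cdf (μ := ρ)).measurable).aestronglyMeasurable,
    integral_eq_lintegral_of_nonneg_ae (f := fun x => max (t - x) 0)
      (Eventually.of_forall fun x => le_max_right _ _)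
      (Continuous.aestronglyMeasurable (by fun_prop)),
    lint_cdf]

private lemma hn_calc (k : ℕ) {n x : ℝ} (h1 : -n ≤ x) (h2 : x ≤ n) :
    ∫ t in Set.Ioc (-n) n, t ^ k * max (t - x) 0
      = n ^ (k+2) / ((k:ℝ)+2) - n ^ (k+1) / ((k:ℝ)+1) * x
        + x ^ (k+2) * (1/((k:ℝ)+1) - 1/((k:ℝ)+2)) := by
  have hle : -n ≤ n := le_trans h1 h2
  rw [← intervalIntegral.integral_of_le hle,
    ← intervalIntegral.integral_add_adjacent_intervals (a := -n) (b := x) (c := n)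
      (Continuous.intervalIntegrable (by fun_prop) _ _)
      (Continuous.intervalIntegrable (by fun_prop) _ _)]
  have e1 : ∫ t in (-n)..x, t ^ k * max (t - x) 0 = 0 := by
    rw [intervalIntegral.integral_congr (g := fun _ => (0:ℝ)) ?_, intervalIntegral.integral_zero]
    intro t ht
    rw [Set.uIcc_of_le h1] at ht
    simp [max_eq_right (by linarith [ht.2] : t - x ≤ 0)]
  have e2 : ∫ t in x..n, t ^ k * max (t - x) 0
      = (n^(k+2) - x^(k+2))/((k:ℝ)+2) - x * ((n^(k+1) - x^(k+1))/((k:ℝ)+1)) := by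
    rw [intervalIntegral.integral_congr (g := fun t => t^(k+1) - x * t^k) ?_]
    · rw [intervalIntegral.integral_sub (Continuous.intervalIntegrable (by fun_prop) _ _)
        (Continuous.intervalIntegrable (by fun_prop) _ _),
        integral_pow, intervalIntegral.integral_const_mul, integral_pow]
      push_cast; ring
    · intro t ht
      rw [Set.uIcc_of_le h2] at ht
      show t ^ k * max (t - x) 0 = t^(k+1) - x * t^k
      rw [max_eq_left (by linarith [ht.1] : 0 ≤ t - x)]; ring
  rw [e1, e2]
  have hk1 : ((k:ℝ)+1) ≠ 0 := by positivity
  have hk2 : ((k:ℝ)+2) ≠ 0 := by positivity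
  field_simp; ring

private lemma hn_zero (k : ℕ) {n x : ℝ} (h : n ≤ x) :
    ∫ t in Set.Ioc (-n) n, t ^ k * max (t - x) 0 = 0 := by
  rw [setIntegral_congr_fun (g := fun _ => (0:ℝ)) measurableSet_Ioc ?_, integral_zero]
  intro t ht; simp [max_eq_right (by linarith [ht.2] : t - x ≤ 0)]

private lemma hn_bound (k : ℕ) {n x : ℝ} (hn : 0 ≤ n) (h : x ≤ -n) :
    ‖∫ t in Set.Ioc (-n) n, t ^ k * max (t - x) 0‖ ≤ 4 * |x| ^ (k+2) := by
  have hxn : n ≤ |x| := by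
    rw [abs_of_nonpos (by linarith)]; linarith
  have hx0 : 0 ≤ |x| := abs_nonneg x
  have hb : ∀ t ∈ Set.Ioc (-n) n, ‖t ^ k * max (t - x) 0‖ ≤ n ^ k * (n + |x|) := by
    intro t ht
    rw [norm_mul, norm_pow]
    have htn : |t| ≤ n := abs_le.2 ⟨le_of_lt ht.1, ht.2⟩
    have h2 : ‖max (t - x) 0‖ ≤ n + |x| := by
      rw [Real.norm_eq_abs, abs_of_nonneg (le_max_right _ _)]
      rcases le_total (t - x) 0 with h' | h'
      · rw [max_eq_right h']; positivity
      · rw [max_eq_left h']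
        have := abs_le.1 htn
        have := abs_le.1 (le_refl |x|)
        have hxx : -|x| ≤ x := neg_abs_le x
        linarith [this.2]
    rw [Real.norm_eq_abs t]
    exact mul_le_mul (pow_le_pow_left₀ (abs_nonneg t) htn k) h2 (norm_nonneg _) (by positivity)
  have key : ‖∫ t in Set.Ioc (-n) n, t ^ k * max (t - x) 0‖
      ≤ n ^ k * (n + |x|) * (volume (Set.Ioc (-n) n)).toReal :=
    norm_setIntegral_le_of_norm_le_const
      (by rw [Real.volume_Ioc]; exact ENNReal.ofReal_lt_top) hb
  rw [Real.volume_Ioc, ENNReal.toReal_ofReal (by linarith)] at key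
  refine key.trans ?_
  have h1 : n ^ k ≤ |x| ^ k := pow_le_pow_left₀ hn hxn k
  have h2 : n + |x| ≤ 2 * |x| := by linarith
  have h3 : n - -n ≤ 2 * |x| := by linarith
  have step : n ^ k * (n + |x|) * (n - -n) ≤ |x| ^ k * (2 * |x|) * (2 * |x|) := by
    have e1 : (0:ℝ) ≤ n + |x| := by linarith
    have e2 : (0:ℝ) ≤ n - -n := by linarith
    have e3 : (0:ℝ) ≤ n ^ k := by positivity
    have s1 : n ^ k * (n + |x|) * (n - -n) ≤ |x| ^ k * (2 * |x|) * (2 * |x|) := by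
      apply mul_le_mul (mul_le_mul h1 h2 e1 (by positivity)) h3 e2 (by positivity)
    exact s1
  refine step.trans (le_of_eq ?_)
  ring

private lemma mom_one {ρ : Measure ℝ} [IsProbabilityMeasure ρ] {k : ℕ}
    (h : Integrable (fun x : ℝ => |x| ^ (k + 2)) ρ) : Integrable (fun x : ℝ => x) ρ := by
  refine Integrable.mono' ((integrable_const 1).add h)
    measurable_id.aestronglyMeasurable (Eventually.of_forall fun x => ?_)
  show ‖x‖ ≤ 1 + |x| ^ (k + 2)
  rw [Real.norm_eq_abs]
  rcases le_total |x| 1 with h' | h'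
  · have : (0:ℝ) ≤ |x|^(k+2) := by positivity
    linarith
  · have : |x| ≤ |x|^(k+2) := le_self_pow₀ h' (by omega)
    linarith

private lemma mom_top {ρ : Measure ℝ} {k : ℕ}
    (h : Integrable (fun x : ℝ => |x| ^ (k + 2)) ρ) :
    Integrable (fun x : ℝ => x ^ (k + 2)) ρ := by
  refine h.mono' (Continuous.aestronglyMeasurable (by fun_prop))
    (Eventually.of_forall fun x => ?_)
  rw [Real.norm_eq_abs, abs_pow]

private lemma snd_int {ρ : Measure ℝ} [IsProbabilityMeasure ρ] {f : ℝ → ℝ}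
    (hf : Integrable f ρ) (s : Set ℝ) (hs : volume s ≠ ⊤) (hsm : MeasurableSet s) :
    Integrable (fun p : ℝ × ℝ => f p.2) ((volume.restrict s).prod ρ) := by
  have hfin : IsFiniteMeasure (volume.restrict s) :=
    ⟨by rwa [Measure.restrict_apply_univ, lt_top_iff_ne_top]⟩
  refine (integrable_prod_iff
    (hf.aestronglyMeasurable.comp_quasiMeasurePreserving Measure.quasiMeasurePreserving_snd)).mpr
    ⟨Eventually.of_forall fun _ => hf, ?_⟩
  simpa using integrable_const (μ := volume.restrict s) (∫ y, ‖f y‖ ∂ρ)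

private lemma prod_int (ρ : Measure ℝ) [IsProbabilityMeasure ρ]
    (hρ1 : Integrable (fun x : ℝ => x) ρ) (k : ℕ) (n : ℝ) :
    Integrable (Function.uncurry fun t x : ℝ => t ^ k * max (t - x) 0)
      ((volume.restrict (Set.Ioc (-n) n)).prod ρ) := by
  set M : ℝ := |n| + 1 with hM
  have hM1 : (1:ℝ) ≤ M := by rw [hM]; linarith [abs_nonneg n]
  have hg : Integrable (fun p : ℝ × ℝ => M ^ k * M * (1 + |p.2|))
      ((volume.restrict (Set.Ioc (-n) n)).prod ρ) := by
    apply Integrable.const_mul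
    exact (integrable_const 1).add (snd_int hρ1.abs _
      (by rw [Real.volume_Ioc]; exact ENNReal.ofReal_ne_top) measurableSet_Ioc)
  have hae : ∀ᵐ p ∂((volume.restrict (Set.Ioc (-n) n)).prod ρ), p.1 ∈ Set.Ioc (-n) n := by
    rw [ae_iff]
    refine measure_mono_null (fun p hp => ?_)
      (show ((volume.restrict (Set.Ioc (-n) n)).prod ρ)
        ((Set.Ioc (-n) n)ᶜ ×ˢ Set.univ) = 0 from ?_)
    · exact ⟨hp, Set.mem_univ _⟩
    · rw [Measure.prod_prod, Measure.restrict_apply (measurableSet_Ioc.compl),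
        Set.compl_inter_self, measure_empty, zero_mul]
  refine Integrable.mono' hg (Continuous.aestronglyMeasurable (by fun_prop)) ?_
  filter_upwards [hae] with p hp
  have ht : |p.1| ≤ M := by
    rcases le_total 0 n with h | h
    · have := abs_le.2 ⟨le_of_lt hp.1, hp.2⟩
      rw [abs_of_nonneg h] at *
      simp only [hM]; linarith [abs_le.2 ⟨le_of_lt hp.1, hp.2⟩]
    · exfalso; have := hp.1.trans_le hp.2; linarith
  show ‖p.1 ^ k * max (p.1 - p.2) 0‖ ≤ M ^ k * M * (1 + |p.2|)
  rw [norm_mul, norm_pow, Real.norm_eq_abs p.1]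
  have h2 : ‖max (p.1 - p.2) 0‖ ≤ M + |p.2| := by
    rw [Real.norm_eq_abs, abs_of_nonneg (le_max_right _ _)]
    rcases le_total (p.1 - p.2) 0 with h' | h'
    · rw [max_eq_right h']; positivity
    · rw [max_eq_left h']
      have := abs_le.1 ht
      have := neg_abs_le p.2
      linarith
  have h3 : M + |p.2| ≤ M * (1 + |p.2|) := by nlinarith [abs_nonneg p.2]
  calc |p.1| ^ k * ‖max (p.1 - p.2) 0‖
      ≤ M ^ k * (M * (1 + |p.2|)) :=
        mul_le_mul (pow_le_pow_left₀ (abs_nonneg _) ht k) (h2.trans h3) (norm_nonneg _)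
          (by positivity)
    _ = M ^ k * M * (1 + |p.2|) := by ring

private lemma tail_tendsto {ρ : Measure ℝ} [IsProbabilityMeasure ρ] {f : ℝ → ℝ}
    (hf : Integrable f ρ) (hf0 : ∀ x, 0 ≤ f x) :
    Tendsto (fun n : ℝ => ∫ x, Set.indicator {y : ℝ | n < |y|} f x ∂ρ) atTop (𝓝 0) := by
  set T : ℝ → ℝ := fun n => ∫ x, Set.indicator {y : ℝ | n < |y|} f x ∂ρ with hT
  have hms : ∀ n : ℝ, MeasurableSet {y : ℝ | n < |y|} := fun n =>
    measurableSet_lt measurable_const measurable_abs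
  have hint : ∀ n : ℝ, Integrable (Set.indicator {y : ℝ | n < |y|} f) ρ := fun n =>
    hf.indicator (hms n)
  have hTnonneg : ∀ n, 0 ≤ T n := fun n =>
    integral_nonneg (Set.indicator_nonneg (fun y _ => hf0 y))
  have hmono : ∀ {a b : ℝ}, a ≤ b → T b ≤ T a := by
    intro a b hab
    refine integral_mono (hint b) (hint a) fun x => ?_
    exact Set.indicator_le_indicator_of_subset
      (fun y hy => lt_of_le_of_lt hab hy) hf0 x
  have hnat : Tendsto (fun m : ℕ => T (m : ℝ)) atTop (𝓝 0) := by
    rw [show (0:ℝ) = ∫ _x, (0:ℝ) ∂ρ by simp]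
    apply tendsto_integral_of_dominated_convergence f
      (fun m => (hint (m : ℝ)).aestronglyMeasurable) hf
    · intro m
      refine Eventually.of_forall fun x => ?_
      rw [Real.norm_eq_abs, abs_of_nonneg (Set.indicator_nonneg (fun y _ => hf0 y) x)]
      exact Set.indicator_le_self' (fun y _ => hf0 y) x
    · refine Eventually.of_forall fun x => ?_
      refine tendsto_const_nhds.congr' ?_
      filter_upwards [eventually_ge_atTop (⌈|x|⌉₊)] with m hm
      rw [Set.indicator_of_notMem]
      simp only [Set.mem_setOf_eq, not_lt]
      calc |x| ≤ (⌈|x|⌉₊ : ℝ) := Nat.le_ceil _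
        _ ≤ (m : ℝ) := by exact_mod_cast hm
  refine squeeze_zero' (Eventually.of_forall hTnonneg) ?_
    (hnat.comp tendsto_nat_floor_atTop)
  filter_upwards [eventually_ge_atTop (0:ℝ)] with n hn
  exact hmono (Nat.floor_le hn)

private lemma step12 (k : ℕ) (ρ : Measure ℝ) [IsProbabilityMeasure ρ]
    (hρ : Integrable (fun x : ℝ => |x| ^ (k + 2)) ρ) {n : ℝ} (hn : 0 ≤ n) :
    Integrable (fun t : ℝ => t ^ k * ∫ x, max (t - x) 0 ∂ρ)
      (volume.restrict (Set.Ioc (-n) n)) ∧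
    ‖(∫ t in Set.Ioc (-n) n, t ^ k * ∫ x, max (t - x) 0 ∂ρ)
        - (n ^ (k+2) / ((k:ℝ)+2) - n ^ (k+1) / ((k:ℝ)+1) * (∫ x, x ∂ρ)
           + (∫ x, x ^ (k+2) ∂ρ) * (1/((k:ℝ)+1) - 1/((k:ℝ)+2)))‖
      ≤ ∫ x, Set.indicator {y : ℝ | n < |y|} (fun y => 7 * |y| ^ (k+2)) x ∂ρ := by
  have hρ1 : Integrable (fun x : ℝ => x) ρ := mom_one hρ
  have hρ2 : Integrable (fun x : ℝ => x ^ (k+2)) ρ := mom_top hρ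
  have hprod := prod_int ρ hρ1 k n
  have e : (fun t : ℝ => t ^ k * ∫ x, max (t - x) 0 ∂ρ)
      = fun t : ℝ => ∫ x, t ^ k * max (t - x) 0 ∂ρ :=
    funext fun t => (integral_const_mul _ _).symm
  set A : ℝ := n ^ (k+2) / ((k:ℝ)+2) with hA'
  set B : ℝ := n ^ (k+1) / ((k:ℝ)+1) with hB'
  set c : ℝ := 1/((k:ℝ)+1) - 1/((k:ℝ)+2) with hc'
  have hceq : c = 1 / (((k:ℝ)+1) * ((k:ℝ)+2)) := by
    rw [hc']
    have h1 : ((k:ℝ)+1) ≠ 0 := by positivity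
    have h2 : ((k:ℝ)+2) ≠ 0 := by positivity
    field_simp
    ring
  have hc0 : 0 ≤ c := by rw [hceq]; positivity
  have hc1 : c ≤ 1 := by
    rw [hceq, div_le_one (by positivity)]
    nlinarith [Nat.cast_nonneg (α := ℝ) k]
  constructor
  · rw [e]; exact hprod.integral_prod_left
  have hswap : (∫ t in Set.Ioc (-n) n, t ^ k * ∫ x, max (t - x) 0 ∂ρ)
      = ∫ x, (∫ t in Set.Ioc (-n) n, t ^ k * max (t - x) 0) ∂ρ := by
    rw [e]
    exact integral_integral_swap hprod
  have hφ1 : Integrable (fun x : ℝ => A - B * x) ρ := (integrable_const A).sub (hρ1.const_mul B)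
  have hφ2 : Integrable (fun x : ℝ => x ^ (k+2) * c) ρ := hρ2.mul_const c
  have hφint : Integrable (fun x => A - B * x + x ^ (k+2) * c) ρ := hφ1.add hφ2
  have hφ : ∫ x, (A - B * x + x ^ (k+2) * c) ∂ρ
      = A - B * (∫ x, x ∂ρ) + (∫ x, x ^ (k+2) ∂ρ) * c := by
    rw [integral_add hφ1 hφ2, integral_sub (integrable_const A) (hρ1.const_mul B),
      integral_const, integral_const_mul, integral_mul_const]
    simp [measure_univ]
  have Hint : Integrable (fun x => ∫ t in Set.Ioc (-n) n, t ^ k * max (t - x) 0) ρ :=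
    hprod.integral_prod_right
  have hms : MeasurableSet {y : ℝ | n < |y|} :=
    measurableSet_lt measurable_const measurable_abs
  have hindint : Integrable (Set.indicator {y : ℝ | n < |y|} (fun y => 7 * |y| ^ (k+2))) ρ :=
    (hρ.const_mul 7).indicator hms
  rw [hswap, ← hφ, ← integral_sub Hint hφint]
  refine (norm_integral_le_integral_norm _).trans (integral_mono ((Hint.sub hφint).norm)
    hindint fun x => ?_)
  rcases le_or_gt |x| n with hx | hx
  · have hxx := abs_le.1 hx
    show ‖(∫ t in Set.Ioc (-n) n, t ^ k * max (t - x) 0) - (A - B * x + x ^ (k+2) * c)‖ ≤ _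
    rw [hn_calc k hxx.1 hxx.2]
    simp only [hA', hB', hc', sub_self, norm_zero]
    exact Set.indicator_nonneg (fun y _ => by positivity) x
  · have hxn : n ≤ |x| := hx.le
    have hxpos : 0 ≤ |x| := abs_nonneg x
    have hk1 : (1:ℝ) ≤ (k:ℝ) + 1 := by
      have := Nat.cast_nonneg (α := ℝ) k; linarith
    have hk2 : (1:ℝ) ≤ (k:ℝ) + 2 := by linarith
    have hA0 : 0 ≤ A := by rw [hA']; positivity
    have hB0 : 0 ≤ B := by rw [hB']; positivity
    have hAle : A ≤ |x| ^ (k+2) := by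
      rw [hA']
      calc n ^ (k+2) / ((k:ℝ)+2) ≤ n ^ (k+2) := div_le_self (by positivity) hk2
        _ ≤ |x| ^ (k+2) := pow_le_pow_left₀ hn hxn _
    have hBle : B ≤ |x| ^ (k+1) := by
      rw [hB']
      calc n ^ (k+1) / ((k:ℝ)+1) ≤ n ^ (k+1) := div_le_self (by positivity) hk1
        _ ≤ |x| ^ (k+1) := pow_le_pow_left₀ hn hxn _
    have hφb : ‖A - B * x + x ^ (k+2) * c‖ ≤ 3 * |x| ^ (k+2) := by
      have step1 : ‖A - B * x + x ^ (k+2) * c‖ ≤ A + B * |x| + |x| ^ (k+2) * c := by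
        calc ‖A - B * x + x ^ (k+2) * c‖
            ≤ ‖A - B * x‖ + ‖x ^ (k+2) * c‖ := norm_add_le _ _
          _ ≤ (‖A‖ + ‖B * x‖) + ‖x ^ (k+2) * c‖ := by
              gcongr; exact norm_sub_le _ _
          _ = A + B * |x| + |x| ^ (k+2) * c := by
              rw [Real.norm_eq_abs, Real.norm_eq_abs, Real.norm_eq_abs, abs_of_nonneg hA0,
                abs_mul, abs_mul, abs_of_nonneg hB0, abs_pow, abs_of_nonneg hc0]
      have hB2 : B * |x| ≤ |x| ^ (k+2) := by
        calc B * |x| ≤ |x| ^ (k+1) * |x| := mul_le_mul_of_nonneg_right hBle hxpos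
          _ = |x| ^ (k+2) := by rw [← pow_succ]
      have hC2 : |x| ^ (k+2) * c ≤ |x| ^ (k+2) :=
        mul_le_of_le_one_right (by positivity) hc1
      linarith
    rw [Set.indicator_of_mem (show x ∈ {y : ℝ | n < |y|} from hx)]
    rcases lt_abs.1 hx with h' | h'
    · show ‖(∫ t in Set.Ioc (-n) n, t ^ k * max (t - x) 0) - (A - B * x + x ^ (k+2) * c)‖ ≤ _
      rw [hn_zero k h'.le, zero_sub, norm_neg]
      have : (0:ℝ) ≤ |x| ^ (k+2) := by positivity
      linarith
    · have hb := hn_bound k hn (by linarith : x ≤ -n)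
      calc ‖(∫ t in Set.Ioc (-n) n, t ^ k * max (t - x) 0) - (A - B * x + x ^ (k+2) * c)‖
          ≤ ‖(∫ t in Set.Ioc (-n) n, t ^ k * max (t - x) 0)‖ + ‖A - B * x + x ^ (k+2) * c‖ :=
            norm_sub_le _ _
        _ ≤ 4 * |x| ^ (k+2) + 3 * |x| ^ (k+2) := add_le_add hb hφb
        _ = 7 * |x| ^ (k+2) := by ring

theorem stmt_16 (k : ℕ) (μ ν : Measure ℝ) [IsProbabilityMeasure μ] [IsProbabilityMeasure ν]
    (hμ : Integrable (fun x : ℝ => |x| ^ (k + 2)) μ)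
    (hν : Integrable (fun x : ℝ => |x| ^ (k + 2)) ν)
    (hmean : (∫ x, x ∂μ) = ∫ x, x ∂ν) :
    Tendsto
      (fun n : ℝ => ∫ t in (-n)..n, t ^ k * ∫ u in Set.Iic t, (cdf ν u - cdf μ u))
      atTop
      (nhds ((1 / (((k : ℝ) + 1) * ((k : ℝ) + 2))) *
        ((∫ u, u ^ (k + 2) ∂ν) - ∫ u, u ^ (k + 2) ∂μ))) := by
  have hμ1 : Integrable (fun x : ℝ => x) μ := mom_one hμ
  have hν1 : Integrable (fun x : ℝ => x) ν := mom_one hν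
  have hG : ∀ t : ℝ, (∫ u in Set.Iic t, (cdf ν u - cdf μ u))
      = (∫ x, max (t - x) 0 ∂ν) - ∫ x, max (t - x) 0 ∂μ := by
    intro t
    rw [integral_sub (cdf_intOn ν hν1 t) (cdf_intOn μ hμ1 t),
      cdf_setIntegral ν hν1 t, cdf_setIntegral μ hμ1 t]
  have hk1 : ((k:ℝ)+1) ≠ 0 := by positivity
  have hk2 : ((k:ℝ)+2) ≠ 0 := by positivity
  have hceq : (1 / (((k : ℝ) + 1) * ((k : ℝ) + 2))) = 1/((k:ℝ)+1) - 1/((k:ℝ)+2) := by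
    field_simp
    norm_num
  rw [hceq]
  set c : ℝ := 1/((k:ℝ)+1) - 1/((k:ℝ)+2) with hc
  set Δ : ℝ := (∫ u, u ^ (k + 2) ∂ν) - ∫ u, u ^ (k + 2) ∂μ with hΔ
  set T : Measure ℝ → ℝ → ℝ := fun ρ n =>
    ∫ x, Set.indicator {y : ℝ | n < |y|} (fun y => 7 * |y| ^ (k+2)) x ∂ρ with hT
  have key : ∀ n : ℝ, 0 ≤ n →
      ‖(∫ t in (-n)..n, t ^ k * ∫ u in Set.Iic t, (cdf ν u - cdf μ u)) - c * Δ‖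
        ≤ T ν n + T μ n := by
    intro n hn
    obtain ⟨hIν, hbν⟩ := step12 k ν hν hn
    obtain ⟨hIμ, hbμ⟩ := step12 k μ hμ hn
    set Iν : ℝ := ∫ t in Set.Ioc (-n) n, t ^ k * ∫ x, max (t - x) 0 ∂ν with hIν'
    set Iμ : ℝ := ∫ t in Set.Ioc (-n) n, t ^ k * ∫ x, max (t - x) 0 ∂μ with hIμ'
    set Pν : ℝ := n ^ (k+2) / ((k:ℝ)+2) - n ^ (k+1) / ((k:ℝ)+1) * (∫ x, x ∂ν)
      + (∫ x, x ^ (k+2) ∂ν) * c with hPν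
    set Pμ : ℝ := n ^ (k+2) / ((k:ℝ)+2) - n ^ (k+1) / ((k:ℝ)+1) * (∫ x, x ∂μ)
      + (∫ x, x ^ (k+2) ∂μ) * c with hPμ
    have hD : (∫ t in (-n)..n, t ^ k * ∫ u in Set.Iic t, (cdf ν u - cdf μ u))
        = Iν - Iμ := by
      rw [hIν', hIμ', intervalIntegral.integral_of_le (by linarith : -n ≤ n),
        ← integral_sub hIν hIμ]
      refine setIntegral_congr_fun measurableSet_Ioc fun t _ => ?_
      rw [hG t]; ring
    have hP : Pν - Pμ = c * Δ := by
      rw [hPν, hPμ, hΔ, hmean]; ring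
    have heq : (∫ t in (-n)..n, t ^ k * ∫ u in Set.Iic t, (cdf ν u - cdf μ u)) - c * Δ
        = (Iν - Pν) - (Iμ - Pμ) := by
      rw [hD, ← hP]; ring
    rw [heq]
    calc ‖(Iν - Pν) - (Iμ - Pμ)‖ ≤ ‖Iν - Pν‖ + ‖Iμ - Pμ‖ := norm_sub_le _ _
      _ ≤ T ν n + T μ n := add_le_add hbν hbμ
  have htail : Tendsto (fun n : ℝ => T ν n + T μ n) atTop (𝓝 0) := by
    have h1 := tail_tendsto (ρ := ν) (hν.const_mul 7) (fun x => by positivity)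
    have h2 := tail_tendsto (ρ := μ) (hμ.const_mul 7) (fun x => by positivity)
    simpa using h1.add h2
  have hsq : Tendsto (fun n : ℝ =>
      (∫ t in (-n)..n, t ^ k * ∫ u in Set.Iic t, (cdf ν u - cdf μ u)) - c * Δ)
      atTop (𝓝 0) := by
    refine squeeze_zero_norm' ?_ htail
    filter_upwards [eventually_ge_atTop (0:ℝ)] with n hn
    exact key n hn
  have := hsq.add_const (c * Δ)
  simpa using this
end

section
/- For every y ∈ ℝ and a > 0, the total variation norm of the difference between the Gaussian measure with mean y and variance a² and the Gaussian measure with mean 0 and variance a² is at most |y|/a; that is, |N(y, a²) − N(0, a²)|(ℝ) ≤ |y|/a, where |σ| denotes the total variation measure of the signed measure σ. -/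
open MeasureTheory ProbabilityTheory

lemma tv_le_of_forall {α : Type*} [MeasurableSpace α] (μ ν : Measure α)
    [IsProbabilityMeasure μ] [IsProbabilityMeasure ν] {C : ℝ}
    (hC : ∀ i : Set α, MeasurableSet i → (μ i).toReal - (ν i).toReal ≤ C) :
    (μ.toSignedMeasure - ν.toSignedMeasure).totalVariation Set.univ ≤
      ENNReal.ofReal (2 * C) := by
  set s := μ.toSignedMeasure - ν.toSignedMeasure with hs
  obtain ⟨i, hi₁, hi₂, hi₃, hpos, hneg⟩ := s.toJordanDecomposition_spec
  have hsi : ∀ j : Set α, MeasurableSet j → s j = (μ j).toReal - (ν j).toReal := by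
    intro j hj
    rw [hs, Measure.toSignedMeasure_sub_apply hj]; rfl
  have hsunion : s i + s iᶜ = 0 := by
    rw [hsi i hi₁, hsi iᶜ hi₁.compl]
    have h1 : μ i + μ iᶜ = 1 := by
      rw [measure_add_measure_compl hi₁, measure_univ]
    have h2 : ν i + ν iᶜ = 1 := by
      rw [measure_add_measure_compl hi₁, measure_univ]
    have := ENNReal.toReal_add (measure_ne_top μ i) (measure_ne_top μ iᶜ)
    have := ENNReal.toReal_add (measure_ne_top ν i) (measure_ne_top ν iᶜ)
    have h1' : (μ i).toReal + (μ iᶜ).toReal = 1 := by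
      rw [← ENNReal.toReal_add (measure_ne_top μ i) (measure_ne_top μ iᶜ), h1]; simp
    have h2' : (ν i).toReal + (ν iᶜ).toReal = 1 := by
      rw [← ENNReal.toReal_add (measure_ne_top ν i) (measure_ne_top ν iᶜ), h2]; simp
    linarith
  have key : s.totalVariation Set.univ =
      ENNReal.ofReal (s i) + ENNReal.ofReal (-s iᶜ) := by
    rw [SignedMeasure.totalVariation, Measure.add_apply, hpos, hneg,
      SignedMeasure.toMeasureOfZeroLE_apply _ hi₂ hi₁ MeasurableSet.univ,
      SignedMeasure.toMeasureOfLEZero_apply _ hi₃ hi₁.compl MeasurableSet.univ]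
    simp only [Set.inter_univ]
    rw [ENNReal.ofReal, ENNReal.ofReal]
    have h1 : 0 ≤ s i := VectorMeasure.nonneg_of_zero_le_restrict s hi₂
    have h2 : s iᶜ ≤ 0 := VectorMeasure.nonpos_of_restrict_le_zero s hi₃
    congr 2
    · ext; simp [Real.coe_toNNReal _ h1]
    · ext; simp [Real.coe_toNNReal _ (neg_nonneg.2 h2)]
  rw [key]
  have h1 : 0 ≤ s i := VectorMeasure.nonneg_of_zero_le_restrict s hi₂
  have h2 : -s iᶜ = s i := by linarith
  rw [h2, ← ENNReal.ofReal_add h1 h1]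
  apply ENNReal.ofReal_le_ofReal
  have := hC i hi₁
  rw [← hsi i hi₁] at this
  linarith

lemma gauss_diff_le (y a : ℝ) (hy : 0 ≤ y) (ha : 0 < a) (i : Set ℝ) (hi : MeasurableSet i) :
    ((gaussianReal y (a ^ 2).toNNReal) i).toReal -
        ((gaussianReal 0 (a ^ 2).toNNReal) i).toReal ≤
      y / (Real.sqrt (2 * Real.pi) * a) := by
  set v := (a ^ 2).toNNReal with hv_def
  have hvpos : 0 < v := Real.toNNReal_pos.mpr (by positivity)
  have hv : v ≠ 0 := hvpos.ne'
  have hvr : (v : ℝ) = a ^ 2 := Real.coe_toNNReal _ (sq_nonneg a)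
  have happly : ∀ (m : ℝ) (j : Set ℝ),
      ((gaussianReal m v) j).toReal = ∫ x in j, gaussianPDFReal m v x := by
    intro m j
    rw [gaussianReal_apply_eq_integral m hv j, ENNReal.toReal_ofReal
      (integral_nonneg fun x => gaussianPDFReal_nonneg _ _ _)]
  set f := gaussianPDFReal y v with hf_def
  set g := gaussianPDFReal 0 v with hg_def
  have hint_f : Integrable f := integrable_gaussianPDFReal y v
  have hint_g : Integrable g := integrable_gaussianPDFReal 0 v
  have hint : Integrable (fun x => f x - g x) := hint_f.sub hint_g
  have h2v : (0:ℝ) < 2 * v := by rw [hvr]; positivity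
  -- pointwise comparisons
  have hpt : ∀ x : ℝ, x ≤ y / 2 → f x ≤ g x := by
    intro x hx
    rw [hf_def, hg_def, gaussianPDFReal, gaussianPDFReal]
    refine mul_le_mul_of_nonneg_left (Real.exp_le_exp.2 ?_) (by positivity)
    rw [div_le_div_iff₀ h2v h2v]
    nlinarith [mul_nonneg (mul_nonneg hy (by linarith : (0:ℝ) ≤ y - 2 * x)) h2v.le]
  have hpt' : ∀ x : ℝ, y / 2 ≤ x → g x ≤ f x := by
    intro x hx
    rw [hf_def, hg_def, gaussianPDFReal, gaussianPDFReal]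
    refine mul_le_mul_of_nonneg_left (Real.exp_le_exp.2 ?_) (by positivity)
    rw [div_le_div_iff₀ h2v h2v]
    nlinarith [mul_nonneg (mul_nonneg hy (by linarith : (0:ℝ) ≤ 2 * x - y)) h2v.le]
  set A : Set ℝ := Set.Ioi (y / 2) with hA_def
  -- step 1 : difference over i is at most difference over A
  have step1 : ((gaussianReal y v) i).toReal - ((gaussianReal 0 v) i).toReal ≤
      ((gaussianReal y v) A).toReal - ((gaussianReal 0 v) A).toReal := by
    rw [happly, happly, happly, happly,
      ← integral_sub hint_f.integrableOn hint_g.integrableOn,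
      ← integral_sub hint_f.integrableOn hint_g.integrableOn]
    have hsplit := integral_inter_add_diff (f := fun x => f x - g x) (μ := volume)
      (s := i) (t := A) measurableSet_Ioi hint.integrableOn
    have hneg : ∫ x in i \ A, (f x - g x) ≤ 0 := by
      apply setIntegral_nonpos (hi.diff measurableSet_Ioi)
      intro x hx
      have : x ≤ y / 2 := by
        have := hx.2
        simp only [hA_def, Set.mem_Ioi, not_lt] at this
        exact this
      linarith [hpt x this]
    have hmono : ∫ x in i ∩ A, (f x - g x) ≤ ∫ x in A, (f x - g x) := by
      apply setIntegral_mono_set hint.integrableOn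
      · refine (ae_restrict_iff' measurableSet_Ioi).2 (ae_of_all _ fun x hx => ?_)
        have : y / 2 ≤ x := le_of_lt hx
        have := hpt' x this
        simp only [Pi.zero_apply]
        linarith
      · exact HasSubset.Subset.eventuallyLE Set.inter_subset_right
    linarith
  -- step 2 : compute the difference over A
  have hmap : (gaussianReal y v) A = (gaussianReal 0 v) (Set.Ioi (-(y / 2))) := by
    have h := gaussianReal_map_add_const (μ := 0) (v := v) y
    rw [zero_add] at h
    rw [← h, Measure.map_apply (measurable_add_const y) measurableSet_Ioi]
    congr 1
    ext x
    simp only [Set.mem_preimage, Set.mem_Ioi, hA_def]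
    constructor <;> intro <;> linarith
  have hsplit2 : (gaussianReal 0 v) (Set.Ioi (-(y / 2))) =
      (gaussianReal 0 v) (Set.Ioc (-(y / 2)) (y / 2)) + (gaussianReal 0 v) (Set.Ioi (y / 2)) := by
    rw [← measure_union (Set.Ioc_disjoint_Ioi le_rfl) measurableSet_Ioi,
      Set.Ioc_union_Ioi_eq_Ioi (by linarith)]
  have step2 : ((gaussianReal y v) A).toReal - ((gaussianReal 0 v) A).toReal =
      ((gaussianReal 0 v) (Set.Ioc (-(y / 2)) (y / 2))).toReal := by
    rw [hmap, hsplit2, ENNReal.toReal_add (measure_ne_top _ _) (measure_ne_top _ _)]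
    ring
  -- step 3 : bound the middle interval
  have hsqrt : Real.sqrt (2 * Real.pi * v) = Real.sqrt (2 * Real.pi) * a := by
    rw [hvr, Real.sqrt_mul (by positivity), Real.sqrt_sq ha.le]
  have step3 : ((gaussianReal 0 v) (Set.Ioc (-(y / 2)) (y / 2))).toReal ≤
      y / (Real.sqrt (2 * Real.pi) * a) := by
    rw [happly]
    have hbound : ∀ x ∈ Set.Ioc (-(y / 2)) (y / 2),
        gaussianPDFReal 0 v x ≤ (Real.sqrt (2 * Real.pi * v))⁻¹ := by
      intro x _
      rw [gaussianPDFReal]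
      calc (Real.sqrt (2 * Real.pi * v))⁻¹ * Real.exp (-(x - 0) ^ 2 / (2 * v)) ≤
          (Real.sqrt (2 * Real.pi * v))⁻¹ * 1 := by
            refine mul_le_mul_of_nonneg_left ?_ (by positivity)
            exact Real.exp_le_one_iff.2
              (div_nonpos_of_nonpos_of_nonneg (by nlinarith [sq_nonneg (x - 0)]) h2v.le)
        _ = _ := mul_one _
    calc ∫ x in Set.Ioc (-(y / 2)) (y / 2), gaussianPDFReal 0 v x
        ≤ ∫ _x in Set.Ioc (-(y / 2)) (y / 2), (Real.sqrt (2 * Real.pi * v))⁻¹ := by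
          exact setIntegral_mono_on hint_g.integrableOn
            (integrableOn_const measure_Ioc_lt_top.ne) measurableSet_Ioc hbound
      _ = (volume (Set.Ioc (-(y / 2)) (y / 2))).toReal * (Real.sqrt (2 * Real.pi * v))⁻¹ := by
          rw [setIntegral_const]; rfl
      _ = y * (Real.sqrt (2 * Real.pi) * a)⁻¹ := by
          rw [Real.volume_Ioc, hsqrt, ENNReal.toReal_ofReal (by linarith)]
          ring_nf
      _ = y / (Real.sqrt (2 * Real.pi) * a) := by rw [div_eq_mul_inv]
  linarith

theorem stmt_17 (y a : ℝ) (ha : 0 < a) :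
    ((gaussianReal y (a ^ 2).toNNReal).toSignedMeasure -
        (gaussianReal 0 (a ^ 2).toNNReal).toSignedMeasure).totalVariation Set.univ ≤
      ENNReal.ofReal (|y| / a) := by
  set v := (a ^ 2).toNNReal with hv_def
  have hC : ∀ i : Set ℝ, MeasurableSet i →
      ((gaussianReal y v) i).toReal - ((gaussianReal 0 v) i).toReal ≤
        |y| / (Real.sqrt (2 * Real.pi) * a) := by
    intro i hi
    rcases le_or_gt 0 y with hy | hy
    · rw [abs_of_nonneg hy]
      exact gauss_diff_le y a hy ha i hi
    · have hneg := gauss_diff_le (-y) a (by linarith) ha ((fun x : ℝ => -x) ⁻¹' i)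
        (hi.preimage measurable_neg)
      have h1 : (gaussianReal y v) i = (gaussianReal (-y) v) ((fun x : ℝ => -x) ⁻¹' i) := by
        have hm := gaussianReal_map_const_mul (μ := -y) (v := v) (-1)
        norm_num at hm
        rw [← hm, Measure.map_apply measurable_neg hi]
      have h2 : (gaussianReal 0 v) i = (gaussianReal 0 v) ((fun x : ℝ => -x) ⁻¹' i) := by
        have hm := gaussianReal_map_const_mul (μ := 0) (v := v) (-1)
        norm_num at hm
        conv_lhs => rw [← hm]
        rw [Measure.map_apply measurable_neg hi]
      rw [h1, h2, abs_of_neg hy]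
      exact hneg
  refine (tv_le_of_forall (gaussianReal y v) (gaussianReal 0 v) hC).trans
    (ENNReal.ofReal_le_ofReal ?_)
  have hπ : 2 ≤ Real.sqrt (2 * Real.pi) := by
    have h4 : (4:ℝ) ≤ 2 * Real.pi := by nlinarith [Real.two_le_pi]
    have : Real.sqrt 4 = 2 := by
      rw [show (4:ℝ) = 2 ^ 2 by norm_num, Real.sqrt_sq (by norm_num : (0:ℝ) ≤ 2)]
    linarith [Real.sqrt_le_sqrt h4]
  have hs : 0 < Real.sqrt (2 * Real.pi) * a := by
    have : 0 < Real.sqrt (2 * Real.pi) := by linarith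
    positivity
  calc 2 * (|y| / (Real.sqrt (2 * Real.pi) * a))
      = (2 * |y|) / (Real.sqrt (2 * Real.pi) * a) := by ring
    _ ≤ |y| / a := by
        rw [div_le_div_iff₀ hs ha]
        nlinarith [mul_nonneg (mul_nonneg (abs_nonneg y)
          (by linarith : (0:ℝ) ≤ Real.sqrt (2 * Real.pi) - 2)) ha.le]
end

section
/- Let 0 < l < g and a > 0, and let φ_a and Φ_a denote respectively the probability density function and the cumulative distribution function of the Gaussian measure with mean 0 and variance a². Define t(s) = (1/(g − l))·(2Φ_a(s) − Φ_a(s − g) − Φ_a(s + l)) − φ_a(s). Then t(s) ≥ 0 for every s > g, and t(s) ≤ 0 for every s < −l. -/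
open MeasureTheory ProbabilityTheory
open scoped NNReal

private lemma phi_mono (v : ℝ≥0) (hv : 0 < (v : ℝ)) {x y : ℝ} (hx : 0 ≤ x) (hxy : x ≤ y) :
    gaussianPDFReal 0 v y ≤ gaussianPDFReal 0 v x := by
  unfold gaussianPDFReal
  simp only [sub_zero]
  have h2v : 0 < 2 * (v : ℝ) := by linarith
  have hsq : x ^ 2 ≤ y ^ 2 := by nlinarith
  have hexp : Real.exp (-y ^ 2 / (2 * v)) ≤ Real.exp (-x ^ 2 / (2 * v)) := by
    apply Real.exp_le_exp.mpr
    apply div_le_div_of_nonneg_right (by nlinarith : -y ^ 2 ≤ -x ^ 2) h2v.le |>.trans_eq rfl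
  have hc : (0:ℝ) ≤ (Real.sqrt (2 * Real.pi * v))⁻¹ := by positivity
  exact mul_le_mul_of_nonneg_left hexp hc

private lemma phi_symm (v : ℝ≥0) (x : ℝ) :
    gaussianPDFReal 0 v (-x) = gaussianPDFReal 0 v x := by
  unfold gaussianPDFReal
  ring_nf

private lemma cdf_gauss_sub (v : ℝ≥0) (hv : v ≠ 0) (c b : ℝ) :
    cdf (gaussianReal 0 v) b - cdf (gaussianReal 0 v) c
      = ∫ x in c..b, gaussianPDFReal 0 v x := by
  have h : ∀ x : ℝ, cdf (gaussianReal 0 v) x = ∫ t in Set.Iic x, gaussianPDFReal 0 v t := by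
    intro x
    rw [cdf_eq_real, measureReal_def, gaussianReal_apply_eq_integral 0 hv, ENNReal.toReal_ofReal]
    exact setIntegral_nonneg measurableSet_Iic fun t _ => gaussianPDFReal_nonneg 0 v t
  rw [h, h, intervalIntegral.integral_Iic_sub_Iic ((integrable_gaussianPDFReal 0 v).integrableOn)
    ((integrable_gaussianPDFReal 0 v).integrableOn)]

theorem stmt_19 (l g a : ℝ) (hl : 0 < l) (hlg : l < g) (ha : 0 < a) :
    -- φ is the density and Φ the CDF of the Gaussian with mean 0 and variance a²
    let φ : ℝ → ℝ := gaussianPDFReal 0 (a ^ 2).toNNReal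
    let Φ : ℝ → ℝ := fun s => cdf (gaussianReal 0 (a ^ 2).toNNReal) s
    let t : ℝ → ℝ := fun s => (1 / (g - l)) * (2 * Φ s - Φ (s - g) - Φ (s + l)) - φ s
    (∀ s : ℝ, g < s → 0 ≤ t s) ∧ (∀ s : ℝ, s < -l → t s ≤ 0) := by
  intro φ Φ t
  set v : ℝ≥0 := (a ^ 2).toNNReal with hv_def
  have hvpos : 0 < (v : ℝ) := by
    simp only [hv_def, Real.coe_toNNReal', max_eq_left (sq_nonneg a)]
    positivity
  have hv : v ≠ 0 := by
    intro h
    rw [h] at hvpos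
    simp at hvpos
  have hglpos : 0 < g - l := by linarith
  have hint : ∀ c b : ℝ, IntervalIntegrable φ volume c b :=
    fun c b => (integrable_gaussianPDFReal 0 v).intervalIntegrable
  have hkey : ∀ s : ℝ, t s = (1 / (g - l)) *
      ((∫ x in (s - g)..s, φ x) - ∫ x in s..(s + l), φ x) - φ s := by
    intro s
    have e1 := cdf_gauss_sub v hv (s - g) s
    have e2 := cdf_gauss_sub v hv s (s + l)
    simp only [t, Φ, φ]
    rw [← e1, ← e2]
    ring
  constructor
  · intro s hs
    have h1 : g * φ s ≤ ∫ x in (s - g)..s, φ x := by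
      have := intervalIntegral.integral_mono_on (μ := volume) (f := fun _ => φ s) (g := φ)
        (by linarith : s - g ≤ s) intervalIntegrable_const (hint _ _)
        (fun x hx => phi_mono v hvpos (by linarith [hx.1] : (0:ℝ) ≤ x) hx.2)
      simpa using this
    have h2 : (∫ x in s..(s + l), φ x) ≤ l * φ s := by
      have := intervalIntegral.integral_mono_on (μ := volume) (f := φ) (g := fun _ => φ s)
        (by linarith : s ≤ s + l) (hint _ _) intervalIntegrable_const
        (fun x hx => phi_mono v hvpos (by linarith : (0:ℝ) ≤ s) hx.1)
      simpa using this
    have hnum : (g - l) * φ s ≤ (∫ x in (s - g)..s, φ x) - ∫ x in s..(s + l), φ x := by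
      linarith
    have hmul := mul_le_mul_of_nonneg_left hnum (le_of_lt (by positivity : (0:ℝ) < 1 / (g - l)))
    have heq : (1 / (g - l)) * ((g - l) * φ s) = φ s := by
      field_simp
    rw [hkey s]
    linarith
  · intro s hs
    have hs0 : s + l < 0 := by linarith
    have h1 : (∫ x in (s - g)..s, φ x) ≤ g * φ s := by
      have := intervalIntegral.integral_mono_on (μ := volume) (f := φ) (g := fun _ => φ s)
        (by linarith : s - g ≤ s) (hint _ _) intervalIntegrable_const
        (fun x hx => by
          have := phi_mono v hvpos (x := -s) (y := -x) (by linarith : (0:ℝ) ≤ -s)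
            (by linarith [hx.2] : -s ≤ -x)
          rwa [phi_symm, phi_symm] at this)
      simpa using this
    have h2 : l * φ s ≤ ∫ x in s..(s + l), φ x := by
      have := intervalIntegral.integral_mono_on (μ := volume) (f := fun _ => φ s) (g := φ)
        (by linarith : s ≤ s + l) intervalIntegrable_const (hint _ _)
        (fun x hx => by
          have := phi_mono v hvpos (x := -x) (y := -s) (by linarith [hx.2] : (0:ℝ) ≤ -x)
            (by linarith [hx.1] : -x ≤ -s)
          rwa [phi_symm, phi_symm] at this)
      simpa using this
    have hnum : (∫ x in (s - g)..s, φ x) - (∫ x in s..(s + l), φ x) ≤ (g - l) * φ s := by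
      linarith
    have hmul := mul_le_mul_of_nonneg_left hnum (le_of_lt (by positivity : (0:ℝ) < 1 / (g - l)))
    have heq : (1 / (g - l)) * ((g - l) * φ s) = φ s := by
      field_simp
    rw [hkey s]
    linarith
end
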